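/- Let G be a cyclic group of prime order q, let g_1 be a generator of G, and let g_2 ∈ G with g_2 ≠ 1. Let N be a positive integer with N < q, and define L = { (g_1^r, g_2^r) : r ∈ ℤ } ⊆ G × G. Then for every pair (u_1, u_2) ∈ G × G, there is at most one π ∈ {1,…,N} such that (u_1, u_2·g_2^{−π}) ∈ L; that is, if π_1, π_2 ∈ {1,…,N} satisfy (u_1, u_2·g_2^{−π_1}) ∈ L and (u_1, u_2·g_2^{−π_2}) ∈ L, then π_1 = π_2. -/
import Mathlib


theorem regular_transformation_R2
    (G : Type*) [Group G] [Fintype G] (q : ℕ) (hq : q.Prime)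
    (hcard : Fintype.card G = q)
    (g₁ g₂ : G) (hg₁ : ∀ x : G, x ∈ Subgroup.zpowers g₁) (hg₂ : g₂ ≠ 1)
    (N : ℕ) (hN : 0 < N) (hNq : N < q)
    (u₁ u₂ : G) (π₁ π₂ : ℕ)
    (hπ₁ : π₁ ∈ Finset.Icc 1 N) (hπ₂ : π₂ ∈ Finset.Icc 1 N)
    (hL₁ : ∃ r : ℤ, u₁ = g₁ ^ r ∧ u₂ * g₂ ^ (-(π₁ : ℤ)) = g₂ ^ r)
    (hL₂ : ∃ r : ℤ, u₁ = g₁ ^ r ∧ u₂ * g₂ ^ (-(π₂ : ℤ)) = g₂ ^ r) :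
    π₁ = π₂ := by
  obtain ⟨r₁, h₁u, h₁⟩ := hL₁
  obtain ⟨r₂, h₂u, h₂⟩ := hL₂
  -- order of any non-identity element is q
  have hord : ∀ x : G, x ≠ 1 → orderOf x = q := by
    intro x hx
    have hdvd : orderOf x ∣ q := hcard ▸ orderOf_dvd_card
    rcases (Nat.Prime.eq_one_or_self_of_dvd hq _ hdvd) with h | h
    · exact absurd (orderOf_eq_one_iff.mp h) hx
    · exact h
  have hg₁ne : g₁ ≠ 1 := by
    intro h
    apply hg₂
    rcases hg₁ g₂ with ⟨k, hk⟩
    simp [h] at hk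
    exact hk.symm
  have ho₁ : orderOf g₁ = q := hord g₁ hg₁ne
  have ho₂ : orderOf g₂ = q := hord g₂ hg₂
  -- g₁^(r₁-r₂) = 1
  have hq1 : (q : ℤ) ∣ r₁ - r₂ := by
    have : g₁ ^ (r₁ - r₂) = 1 := by
      rw [zpow_sub, ← h₁u, ← h₂u]; simp
    rw [← ho₁]
    exact orderOf_dvd_iff_zpow_eq_one.mpr this
  -- g₂^(r₁+π₁-(r₂+π₂)) = 1
  have hu₂₁ : u₂ = g₂ ^ (r₁ + (π₁ : ℤ)) := by
    rw [zpow_add, ← h₁, mul_assoc, zpow_neg]; simp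
  have hu₂₂ : u₂ = g₂ ^ (r₂ + (π₂ : ℤ)) := by
    rw [zpow_add, ← h₂, mul_assoc, zpow_neg]; simp
  have hq2 : (q : ℤ) ∣ (r₁ + π₁) - (r₂ + π₂) := by
    have : g₂ ^ ((r₁ + (π₁ : ℤ)) - (r₂ + π₂)) = 1 := by
      rw [zpow_sub, ← hu₂₁, ← hu₂₂]; simp
    rw [← ho₂]
    exact orderOf_dvd_iff_zpow_eq_one.mpr this
  have hq3 : (q : ℤ) ∣ (π₁ : ℤ) - π₂ := by
    have := hq2.sub hq1
    have heq : ((r₁ + π₁) - (r₂ + π₂)) - (r₁ - r₂) = (π₁ : ℤ) - π₂ := by ring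
    rwa [heq] at this
  obtain ⟨h1₁, h1N⟩ := Finset.mem_Icc.mp hπ₁
  obtain ⟨h2₁, h2N⟩ := Finset.mem_Icc.mp hπ₂
  have habs : |(π₁ : ℤ) - π₂| < q := by
    rw [abs_sub_lt_iff]; constructor <;> omega
  have : (π₁ : ℤ) - π₂ = 0 := Int.eq_zero_of_abs_lt_dvd hq3 habs
  omega
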